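/- Let π : P → H be a surjective morphism of Hopf algebras over a field k, Δ_R := (id ⊗ π) ∘ Δ_P, M := { x ∈ P : Δ_R(x) = x ⊗ 1 }, V := M ∩ ker ε_P, and Ω¹M := ker(m_P) ∩ (M ⊗ M) ⊆ P ⊗ P. Let P·Ω¹M denote the left P-submodule of P ⊗ P generated by Ω¹M, where P acts by multiplication on the first tensor factor. Then: (a) for every v ∈ V, θ(v) := Σ S(v₍₁₎) ⊗ v₍₂₎ = Σ S(v₍₁₎)·(1 ⊗ v₍₂₎ − v₍₂₎ ⊗ 1) belongs to P·Ω¹M; (b) the maps Φ : P ⊗ V → P ⊗ P, Φ(p ⊗ v) = Σ p S(v₍₁₎) ⊗ v₍₂₎, and Ψ : P ⊗ P → P ⊗ P, Ψ(a ⊗ b) = Σ a b₍₁₎ ⊗ b₍₂₎, restrict to mutually inverse k-linear bijections between P ⊗ V and P·Ω¹M. -/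

import Mathlib

open TensorProduct

set_option synthInstance.maxHeartbeats 400000
set_option maxHeartbeats 1000000

noncomputable section

variable {k P H : Type*} [Field k] [Ring P] [Ring H] [HopfAlgebra k P] [HopfAlgebra k H]

/-- The right coaction `Δ_R = (id ⊗ π) ∘ Δ_P : P → P ⊗ H`. -/
noncomputable def deltaR (π : P →ₐc[k] H) : P →ₗ[k] P ⊗[k] H :=
  LinearMap.lTensor P π.toLinearMap ∘ₗ Coalgebra.comul

/-- The coinvariant subspace `M = {x ∈ P : Δ_R(x) = x ⊗ 1}` as a submodule. -/
noncomputable def coinvSub (π : P →ₐc[k] H) : Submodule k P :=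
  LinearMap.ker (deltaR π - (TensorProduct.mk k P H).flip 1)

/-- `V = M ∩ ker ε_P`. -/
noncomputable def Vsub (π : P →ₐc[k] H) : Submodule k P :=
  coinvSub π ⊓ LinearMap.ker (Coalgebra.counit (R := k) (A := P))

/-- `Ω¹M = ker(m_P) ∩ (M ⊗ M)` inside `P ⊗ P`. -/
noncomputable def omegaOneM (π : P →ₐc[k] H) : Submodule k (P ⊗[k] P) :=
  LinearMap.ker (LinearMap.mul' k P)
    ⊓ LinearMap.range (TensorProduct.map (coinvSub π).subtype (coinvSub π).subtype)

/-- `P·Ω¹M`: the left `P`-submodule of `P ⊗ P` generated by `Ω¹M`. -/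
noncomputable def POmegaOneM (π : P →ₐc[k] H) : Submodule k (P ⊗[k] P) :=
  Submodule.span k
    {x : P ⊗[k] P | ∃ p : P, ∃ ω ∈ omegaOneM π, x = (LinearMap.mulLeft k p).rTensor P ω}

/-- `θ(v) = Σ S(v₍₁₎) ⊗ v₍₂₎`. -/
noncomputable def thetaMap : P →ₗ[k] P ⊗[k] P :=
  (HopfAlgebra.antipode (R := k) (A := P)).rTensor P ∘ₗ Coalgebra.comul

/-- The universal differential `d : P → P ⊗ P`, `p ↦ 1 ⊗ p − p ⊗ 1`. -/
noncomputable def dUniv : P →ₗ[k] P ⊗[k] P :=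
  TensorProduct.mk k P P 1 - (TensorProduct.mk k P P).flip 1

/-- `v ↦ Σ S(v₍₁₎)·(1 ⊗ v₍₂₎ − v₍₂₎ ⊗ 1)`. -/
noncomputable def thetaMap' : P →ₗ[k] P ⊗[k] P :=
  (LinearMap.mul' k P).rTensor P
    ∘ₗ (TensorProduct.assoc k P P P).symm.toLinearMap
    ∘ₗ TensorProduct.map (HopfAlgebra.antipode (R := k) (A := P)) dUniv
    ∘ₗ Coalgebra.comul

/-- `Φ(p ⊗ v) = Σ p S(v₍₁₎) ⊗ v₍₂₎`, defined on all of `P ⊗ P`. -/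
noncomputable def PhiFull : P ⊗[k] P →ₗ[k] P ⊗[k] P :=
  (LinearMap.mul' k P).rTensor P
    ∘ₗ (TensorProduct.assoc k P P P).symm.toLinearMap
    ∘ₗ LinearMap.lTensor P thetaMap

/-- `Ψ(a ⊗ b) = Σ a b₍₁₎ ⊗ b₍₂₎`. -/
noncomputable def PsiFull : P ⊗[k] P →ₗ[k] P ⊗[k] P :=
  (LinearMap.mul' k P).rTensor P
    ∘ₗ (TensorProduct.assoc k P P P).symm.toLinearMap
    ∘ₗ LinearMap.lTensor P (Coalgebra.comul (R := k) (A := P))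

/-- `Φ` restricted to `P ⊗ V`. -/
noncomputable def PhiV (π : P →ₐc[k] H) : P ⊗[k] ↥(Vsub π) →ₗ[k] P ⊗[k] P :=
  PhiFull ∘ₗ LinearMap.lTensor P (Vsub π).subtype


section Aux
open Coalgebra HopfAlgebra LinearMap


-- general helpers about tensor juggling
lemma helper1 {A A' B C : Type*} [AddCommGroup A] [AddCommGroup A'] [AddCommGroup B]
    [AddCommGroup C] [Module k A] [Module k A'] [Module k B] [Module k C]
    (f : A →ₗ[k] A') :
    (TensorProduct.assoc k A' B C).symm.toLinearMap ∘ₗ f.rTensor (B ⊗[k] C)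
      = ((f.rTensor B).rTensor C) ∘ₗ (TensorProduct.assoc k A B C).symm.toLinearMap := by
  ext a b c; simp

lemma helper2 {A B B' C : Type*} [AddCommGroup A] [AddCommGroup B] [AddCommGroup B']
    [AddCommGroup C] [Module k A] [Module k B] [Module k B'] [Module k C]
    (f : B →ₗ[k] B') :
    (TensorProduct.assoc k A B' C).symm.toLinearMap ∘ₗ LinearMap.lTensor A (f.rTensor C)
      = ((LinearMap.lTensor A f).rTensor C) ∘ₗ (TensorProduct.assoc k A B C).symm.toLinearMap := by
  ext a b c; simp

lemma helper3 {B B' : Type*} [AddCommGroup B] [AddCommGroup B'] [Module k B] [Module k B']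
    (g : B →ₗ[k] B') :
    (LinearMap.lTensor P (LinearMap.lTensor P g)) ∘ₗ (TensorProduct.assoc k P P B).toLinearMap
      = (TensorProduct.assoc k P P B').toLinearMap ∘ₗ LinearMap.lTensor (P ⊗[k] P) g := by
  ext a b c; simp


lemma range_lTensor_mono {A : Type*} [AddCommGroup A] [Module k A] {N N' : Submodule k A}
    (h : N ≤ N') :
    LinearMap.range (LinearMap.lTensor P N.subtype)
      ≤ LinearMap.range (LinearMap.lTensor P N'.subtype) := by
  have e : N.subtype = N'.subtype ∘ₗ Submodule.inclusion h := rfl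
  rw [e, lTensor_comp]
  exact LinearMap.range_comp_le_range _ _

lemma range_lTensor_ker {A B : Type*} [AddCommGroup A] [AddCommGroup B] [Module k A]
    [Module k B] (h : A →ₗ[k] B) :
    LinearMap.range (LinearMap.lTensor P (LinearMap.ker h).subtype)
      = LinearMap.ker (LinearMap.lTensor P h) := by
  have := Module.Flat.lTensor_exact (M := P) (LinearMap.exact_subtype_ker_map h)
  exact (LinearMap.exact_iff.mp this).symm

lemma ker_lTensor_prod {A B : Type*} [AddCommGroup A] [AddCommGroup B] [Module k A]
    [Module k B] (f : P →ₗ[k] A) (g : P →ₗ[k] B) :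
    LinearMap.ker (LinearMap.lTensor P (f.prod g))
      = LinearMap.ker (LinearMap.lTensor P f) ⊓ LinearMap.ker (LinearMap.lTensor P g) := by
  have e : (TensorProduct.prodRight k k P A B).toLinearMap ∘ₗ LinearMap.lTensor P (f.prod g)
      = (LinearMap.lTensor P f).prod (LinearMap.lTensor P g) := by
    apply TensorProduct.ext'
    intro a b
    simp
  rw [← LinearMap.ker_prod, ← e, LinearMap.ker_comp, LinearEquiv.ker, Submodule.comap_bot]


/-- `Γ_T(a ⊗ b) = a · T(b)` (mult. on the first factor). -/
noncomputable def Gamma (T : P →ₗ[k] P ⊗[k] P) : P ⊗[k] P →ₗ[k] P ⊗[k] P :=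
  (LinearMap.mul' k P).rTensor P
    ∘ₗ (TensorProduct.assoc k P P P).symm.toLinearMap
    ∘ₗ LinearMap.lTensor P T

lemma Gamma_tmul (T : P →ₗ[k] P ⊗[k] P) (p x : P) :
    Gamma T (p ⊗ₜ[k] x) = (LinearMap.mulLeft k p).rTensor P (T x) := by
  have : ∀ ξ : P ⊗[k] P,
      (LinearMap.mul' k P).rTensor P ((TensorProduct.assoc k P P P).symm (p ⊗ₜ[k] ξ))
        = (LinearMap.mulLeft k p).rTensor P ξ := by
    intro ξ
    induction ξ using TensorProduct.induction_on with
    | zero => simp only [tmul_zero, map_zero]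
    | tmul x y => simp
    | add x y hx hy => simp [tmul_add, hx, hy]
  simpa [Gamma] using this (T x)

lemma Gamma_mulLeft (T : P →ₗ[k] P ⊗[k] P) (p : P) (x : P ⊗[k] P) :
    Gamma T ((LinearMap.mulLeft k p).rTensor P x)
      = (LinearMap.mulLeft k p).rTensor P (Gamma T x) := by
  induction x using TensorProduct.induction_on with
  | zero => simp
  | tmul a b =>
      rw [rTensor_tmul, mulLeft_apply, Gamma_tmul, Gamma_tmul, mulLeft_mul,
        rTensor_comp, LinearMap.comp_apply]
  | add x y hx hy => simp [hx, hy]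

lemma Gamma_comp (T₁ T₂ : P →ₗ[k] P ⊗[k] P) :
    Gamma T₁ ∘ₗ Gamma T₂ = Gamma (Gamma T₁ ∘ₗ T₂) := by
  apply TensorProduct.ext'
  intro a b
  simp only [LinearMap.comp_apply, Gamma_tmul, Gamma_mulLeft]

lemma Gamma_mk_one : Gamma (TensorProduct.mk k P P 1) = LinearMap.id (R := k) (M := P ⊗[k] P) := by
  apply TensorProduct.ext'
  intro a b
  simp [Gamma_tmul]

lemma psi_theta_apply (v : P) : PsiFull (thetaMap (k := k) v) = (1 : P) ⊗ₜ[k] v := by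
  set S := HopfAlgebra.antipode (R := k) (A := P) with hSdef
  set D := Coalgebra.comul (R := k) (A := P) with hDdef
  have e1c : LinearMap.lTensor P D ∘ₗ S.rTensor P
      = S.rTensor (P ⊗[k] P) ∘ₗ LinearMap.lTensor P D := by
    rw [lTensor_comp_rTensor, rTensor_comp_lTensor]
  have e1 : LinearMap.lTensor P D (S.rTensor P (D v))
      = S.rTensor (P ⊗[k] P) (LinearMap.lTensor P D (D v)) := LinearMap.congr_fun e1c (D v)
  have e2 : (TensorProduct.assoc k P P P).symm (S.rTensor (P ⊗[k] P) (LinearMap.lTensor P D (D v)))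
      = (S.rTensor P).rTensor P ((TensorProduct.assoc k P P P).symm (LinearMap.lTensor P D (D v))) := by
    have := LinearMap.congr_fun (helper1 (k := k) (B := P) (C := P) S)
      (LinearMap.lTensor P D (D v))
    simpa using this
  have e3 : (TensorProduct.assoc k P P P).symm (LinearMap.lTensor P D (D v))
      = D.rTensor P (D v) := Coalgebra.coassoc_symm_apply v
  have e5 : LinearMap.mul' k P ∘ₗ S.rTensor P ∘ₗ D
      = Algebra.linearMap k P ∘ₗ Coalgebra.counit :=
    HopfAlgebra.mul_antipode_rTensor_comul
  simp only [PsiFull, thetaMap, LinearMap.comp_apply, LinearEquiv.coe_coe, ← hSdef, ← hDdef]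
  rw [e1, e2, e3, ← LinearMap.comp_apply ((LinearMap.mul' k P).rTensor P),
    ← rTensor_comp, ← LinearMap.comp_apply, ← rTensor_comp, LinearMap.comp_assoc, e5,
    rTensor_comp, LinearMap.comp_apply]
  rw [show (Coalgebra.counit (R := k)).rTensor P (D v) = (1 : k) ⊗ₜ[k] v from
    Coalgebra.rTensor_counit_comul v]
  simp

lemma phi_comul_apply (v : P) : PhiFull (Coalgebra.comul (R := k) v) = (1 : P) ⊗ₜ[k] v := by
  set S := HopfAlgebra.antipode (R := k) (A := P) with hSdef
  set D := Coalgebra.comul (R := k) (A := P) with hDdef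
  have e1c : LinearMap.lTensor P (thetaMap (k := k))
      = LinearMap.lTensor P (S.rTensor P) ∘ₗ LinearMap.lTensor P D := by
    rw [← lTensor_comp]; rfl
  have e1 : LinearMap.lTensor P (thetaMap (k := k)) (D v)
      = LinearMap.lTensor P (S.rTensor P) (LinearMap.lTensor P D (D v)) :=
    LinearMap.congr_fun e1c (D v)
  have e2 : (TensorProduct.assoc k P P P).symm
        (LinearMap.lTensor P (S.rTensor P) (LinearMap.lTensor P D (D v)))
      = (LinearMap.lTensor P S).rTensor P
        ((TensorProduct.assoc k P P P).symm (LinearMap.lTensor P D (D v))) := by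
    have := LinearMap.congr_fun (helper2 (k := k) (A := P) (C := P) S)
      (LinearMap.lTensor P D (D v))
    simpa using this
  have e3 : (TensorProduct.assoc k P P P).symm (LinearMap.lTensor P D (D v))
      = D.rTensor P (D v) := Coalgebra.coassoc_symm_apply v
  have e5 : LinearMap.mul' k P ∘ₗ LinearMap.lTensor P S ∘ₗ D
      = Algebra.linearMap k P ∘ₗ Coalgebra.counit :=
    HopfAlgebra.mul_antipode_lTensor_comul
  simp only [PhiFull, LinearMap.comp_apply, LinearEquiv.coe_coe, ← hSdef, ← hDdef]
  rw [e1, e2, e3, ← LinearMap.comp_apply ((LinearMap.mul' k P).rTensor P),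
    ← rTensor_comp, ← LinearMap.comp_apply, ← rTensor_comp, LinearMap.comp_assoc, e5,
    rTensor_comp, LinearMap.comp_apply]
  rw [show (Coalgebra.counit (R := k)).rTensor P (D v) = (1 : k) ⊗ₜ[k] v from
    Coalgebra.rTensor_counit_comul v]
  simp

lemma psi_comp_theta : PsiFull ∘ₗ thetaMap (k := k) (P := P) = TensorProduct.mk k P P 1 :=
  LinearMap.ext fun v => by simp [psi_theta_apply, TensorProduct.mk_apply]

lemma phi_comp_comul :
    PhiFull ∘ₗ (Coalgebra.comul (R := k) (A := P)) = TensorProduct.mk k P P 1 :=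
  LinearMap.ext fun v => by simp [phi_comul_apply, TensorProduct.mk_apply]

lemma psi_comp_phi : PsiFull ∘ₗ PhiFull (k := k) (P := P) = LinearMap.id := by
  have h1 : PsiFull (k := k) (P := P) = Gamma Coalgebra.comul := rfl
  have h2 : PhiFull (k := k) (P := P) = Gamma thetaMap := rfl
  rw [h1, h2, Gamma_comp, ← h1, psi_comp_theta, Gamma_mk_one]

lemma phi_comp_psi : PhiFull ∘ₗ PsiFull (k := k) (P := P) = LinearMap.id := by
  have h1 : PsiFull (k := k) (P := P) = Gamma Coalgebra.comul := rfl
  have h2 : PhiFull (k := k) (P := P) = Gamma thetaMap := rfl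
  rw [h2, h1, Gamma_comp, ← h2, phi_comp_comul, Gamma_mk_one]

lemma helper4 (c : P ⊗[k] P) :
    LinearMap.lTensor P ((TensorProduct.mk k P H).flip 1) c
      = TensorProduct.assoc k P P H (c ⊗ₜ[k] (1 : H)) := by
  induction c using TensorProduct.induction_on with
  | zero => simp
  | tmul x y => simp
  | add x y hx hy => simp [add_tmul, hx, hy]

lemma lTensor_fPi_comul (π : P →ₐc[k] H) {v : P} (hv : v ∈ coinvSub π) :
    LinearMap.lTensor P (deltaR π - (TensorProduct.mk k P H).flip 1)
      (Coalgebra.comul (R := k) v) = 0 := by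
  set D := Coalgebra.comul (R := k) (A := P) with hDdef
  have hv' : deltaR π v = v ⊗ₜ[k] (1 : H) := by
    have h0 : (deltaR π - (TensorProduct.mk k P H).flip 1) v = 0 := hv
    have := sub_eq_zero.mp (by simpa using h0)
    simpa using this
  rw [lTensor_sub, LinearMap.sub_apply]
  have t2 : LinearMap.lTensor P ((TensorProduct.mk k P H).flip 1) (D v)
      = TensorProduct.assoc k P P H ((D v) ⊗ₜ[k] (1 : H)) := helper4 (D v)
  have t1 : LinearMap.lTensor P (deltaR π) (D v)
      = TensorProduct.assoc k P P H ((D v) ⊗ₜ[k] (1 : H)) := by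
    have s1 : LinearMap.lTensor P (deltaR π)
        = LinearMap.lTensor P (LinearMap.lTensor P π.toLinearMap) ∘ₗ LinearMap.lTensor P D := by
      rw [← lTensor_comp]; rfl
    have s2 : LinearMap.lTensor P D (D v)
        = TensorProduct.assoc k P P P (D.rTensor P (D v)) :=
      (Coalgebra.coassoc_apply v).symm
    have s3 := LinearMap.congr_fun (helper3 (k := k) (P := P) π.toLinearMap)
      (D.rTensor P (D v))
    have s4c : LinearMap.lTensor (P ⊗[k] P) π.toLinearMap ∘ₗ D.rTensor P
        = D.rTensor H ∘ₗ LinearMap.lTensor P π.toLinearMap := by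
      rw [lTensor_comp_rTensor, rTensor_comp_lTensor]
    have s4 := LinearMap.congr_fun s4c (D v)
    have s5 : LinearMap.lTensor P π.toLinearMap (D v) = deltaR π v := rfl
    have s3' : LinearMap.lTensor P (LinearMap.lTensor P π.toLinearMap)
          (TensorProduct.assoc k P P P (D.rTensor P (D v)))
        = TensorProduct.assoc k P P H
          (LinearMap.lTensor (P ⊗[k] P) π.toLinearMap (D.rTensor P (D v))) := by
      simpa using s3
    simp only [LinearMap.comp_apply] at s4
    rw [s1, LinearMap.comp_apply, s2, s3', s4, s5, hv', rTensor_tmul]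
  rw [t1, t2, sub_self]

lemma comul_mem_range_coinv (π : P →ₐc[k] H) {v : P} (hv : v ∈ coinvSub π) :
    Coalgebra.comul (R := k) v
      ∈ LinearMap.range (LinearMap.lTensor P (coinvSub π).subtype) := by
  have : LinearMap.range (LinearMap.lTensor P (coinvSub π).subtype)
      = LinearMap.ker (LinearMap.lTensor P (deltaR π - (TensorProduct.mk k P H).flip 1)) :=
    range_lTensor_ker _
  rw [this, LinearMap.mem_ker]
  exact lTensor_fPi_comul π hv

lemma range_lTensor_V (π : P →ₐc[k] H) :
    LinearMap.range (LinearMap.lTensor P (Vsub π).subtype)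
      = LinearMap.ker (LinearMap.lTensor P (deltaR π - (TensorProduct.mk k P H).flip 1))
        ⊓ LinearMap.ker (LinearMap.lTensor P (Coalgebra.counit (R := k) (A := P))) := by
  have hV : Vsub π = LinearMap.ker
      ((deltaR π - (TensorProduct.mk k P H).flip 1).prod (Coalgebra.counit (R := k))) :=
    (LinearMap.ker_prod _ _).symm
  have hle : LinearMap.range (LinearMap.lTensor P (Vsub π).subtype)
      = LinearMap.range (LinearMap.lTensor P (LinearMap.ker
        ((deltaR π - (TensorProduct.mk k P H).flip 1).prod
          (Coalgebra.counit (R := k)))).subtype) :=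
    le_antisymm (range_lTensor_mono hV.le) (range_lTensor_mono hV.ge)
  rw [hle, range_lTensor_ker, ker_lTensor_prod]

lemma mu_assoc_tmul (p : P) (xi : P ⊗[k] P) :
    (LinearMap.mul' k P).rTensor P ((TensorProduct.assoc k P P P).symm (p ⊗ₜ[k] xi))
      = (LinearMap.mulLeft k p).rTensor P xi := by
  induction xi using TensorProduct.induction_on with
  | zero => simp only [tmul_zero, map_zero]
  | tmul x y => simp
  | add x y hx hy => simp [tmul_add, hx, hy]

/-- The map `x ⊗ y ↦ S(x)·d(y)`. -/
noncomputable def Amap : P ⊗[k] P →ₗ[k] P ⊗[k] P :=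
  (LinearMap.mul' k P).rTensor P
    ∘ₗ (TensorProduct.assoc k P P P).symm.toLinearMap
    ∘ₗ TensorProduct.map (HopfAlgebra.antipode (R := k) (A := P)) dUniv

lemma thetaMap'_eq_Amap_comul (v : P) :
    thetaMap' (k := k) v = Amap (Coalgebra.comul (R := k) v) := rfl

lemma Amap_tmul (p x : P) :
    Amap (p ⊗ₜ[k] x) = (LinearMap.mulLeft k (HopfAlgebra.antipode (R := k) p)).rTensor P
      (dUniv x) := by
  simp only [Amap, LinearMap.comp_apply, LinearEquiv.coe_coe, TensorProduct.map_tmul]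
  exact mu_assoc_tmul _ _

lemma Amap_eq : Amap (k := k) (P := P)
    = (HopfAlgebra.antipode (R := k) (A := P)).rTensor P
      - ((TensorProduct.mk k P P).flip 1) ∘ₗ LinearMap.mul' k P
        ∘ₗ (HopfAlgebra.antipode (R := k) (A := P)).rTensor P := by
  apply TensorProduct.ext'
  intro x y
  simp [Amap_tmul, dUniv, map_sub, tmul_sub, sub_tmul]

lemma theta'_eq_sub : thetaMap' (k := k) (P := P)
    = thetaMap - ((TensorProduct.mk k P P).flip 1) ∘ₗ Algebra.linearMap k P
        ∘ₗ Coalgebra.counit := by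
  have h : thetaMap' (k := k) (P := P) = Amap ∘ₗ Coalgebra.comul := rfl
  rw [h, Amap_eq, LinearMap.sub_comp]
  congr 1
  rw [LinearMap.comp_assoc, LinearMap.comp_assoc,
    HopfAlgebra.mul_antipode_rTensor_comul]

lemma theta_eq_theta' {v : P} (hv : Coalgebra.counit (R := k) v = 0) :
    thetaMap (k := k) v = thetaMap' v := by
  rw [theta'_eq_sub, LinearMap.sub_apply, LinearMap.comp_apply, LinearMap.comp_apply, hv]
  simp

lemma one_mem_coinv (π : P →ₐc[k] H) : (1 : P) ∈ coinvSub π := by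
  have : deltaR π (1 : P) = (1 : P) ⊗ₜ[k] (1 : H) := by
    simp only [deltaR, LinearMap.comp_apply]
    rw [show Coalgebra.comul (R := k) (1 : P) = (1 : P) ⊗ₜ[k] (1 : P) by
      simpa [Algebra.TensorProduct.one_def] using Bialgebra.comul_one k P]
    simp only [lTensor_tmul]
    congr 1
    exact map_one π
  simp only [coinvSub, LinearMap.mem_ker, LinearMap.sub_apply, this]
  simp

lemma dUniv_mem_omega (π : P →ₐc[k] H) {m : P} (hm : m ∈ coinvSub π) :
    dUniv m ∈ omegaOneM π := by
  constructor
  · simp [dUniv, LinearMap.mem_ker, map_sub]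
  · refine ⟨(⟨1, one_mem_coinv π⟩ : coinvSub π) ⊗ₜ[k] ⟨m, hm⟩
      - (⟨m, hm⟩ : coinvSub π) ⊗ₜ[k] ⟨1, one_mem_coinv π⟩, ?_⟩
    simp [dUniv, map_sub]

lemma mulLeft_rTensor_mem_POmega (π : P →ₐc[k] H) (p : P) {x : P ⊗[k] P}
    (hx : x ∈ POmegaOneM π) :
    (LinearMap.mulLeft k p).rTensor P x ∈ POmegaOneM π := by
  induction hx using Submodule.span_induction with
  | mem x hx =>
      obtain ⟨p', ω, hω, rfl⟩ := hx
      refine Submodule.subset_span ⟨p * p', ω, hω, ?_⟩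
      rw [← LinearMap.comp_apply, ← rTensor_comp, ← mulLeft_mul]
  | zero => simp
  | add x y _ _ hx hy => rw [map_add]; exact Submodule.add_mem _ hx hy
  | smul c x _ hx => rw [map_smul]; exact Submodule.smul_mem _ c hx

lemma theta_mem_POmega (π : P →ₐc[k] H) {v : P} (hv : v ∈ Vsub π) :
    thetaMap (k := k) v ∈ POmegaOneM π := by
  rw [theta_eq_theta' hv.2, thetaMap'_eq_Amap_comul]
  obtain ⟨t, ht⟩ := comul_mem_range_coinv π hv.1
  rw [← ht]
  clear ht
  induction t using TensorProduct.induction_on with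
  | zero => simp only [map_zero]; exact Submodule.zero_mem _
  | tmul p m =>
      rw [lTensor_tmul, Submodule.coe_subtype, Amap_tmul]
      exact Submodule.subset_span
        ⟨HopfAlgebra.antipode (R := k) p, dUniv (m : P), dUniv_mem_omega π m.2, rfl⟩
  | add x y hx hy => rw [map_add, map_add]; exact Submodule.add_mem _ hx hy

lemma lTensor_rTensor_mulLeft {A : Type*} [AddCommGroup A] [Module k A]
    (g : P →ₗ[k] A) (p : P) (z : P ⊗[k] P) :
    LinearMap.lTensor P g ((LinearMap.mulLeft k p).rTensor P z)
      = (LinearMap.mulLeft k p).rTensor A (LinearMap.lTensor P g z) := by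
  rw [← LinearMap.comp_apply, ← LinearMap.comp_apply, lTensor_comp_rTensor,
    rTensor_comp_lTensor]

lemma psi_mulLeft (p : P) (x : P ⊗[k] P) :
    PsiFull ((LinearMap.mulLeft k p).rTensor P x)
      = (LinearMap.mulLeft k p).rTensor P (PsiFull x) :=
  Gamma_mulLeft _ p x

lemma psi_counit_comp :
    LinearMap.lTensor P (Coalgebra.counit (R := k) (A := P)) ∘ₗ PsiFull
      = ((TensorProduct.mk k P k).flip 1) ∘ₗ LinearMap.mul' k P := by
  apply TensorProduct.ext'
  intro a b
  have h1 : PsiFull (a ⊗ₜ[k] b)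
      = (LinearMap.mulLeft k a).rTensor P (Coalgebra.comul (R := k) b) := Gamma_tmul _ a b
  simp only [LinearMap.comp_apply, h1, lTensor_rTensor_mulLeft]
  rw [Coalgebra.lTensor_counit_comul]
  simp

lemma psi_kerf (π : P →ₐc[k] H) {y : P ⊗[k] P}
    (hy : y ∈ LinearMap.range (LinearMap.lTensor P (coinvSub π).subtype)) :
    LinearMap.lTensor P (deltaR π - (TensorProduct.mk k P H).flip 1) (PsiFull y) = 0 := by
  obtain ⟨t, rfl⟩ := hy
  induction t using TensorProduct.induction_on with
  | zero => simp only [map_zero]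
  | tmul a m =>
      rw [lTensor_tmul, Submodule.coe_subtype,
        show PsiFull (a ⊗ₜ[k] (m : P))
          = (LinearMap.mulLeft k a).rTensor P (Coalgebra.comul (R := k) (m : P)) from
          Gamma_tmul _ a (m : P),
        lTensor_rTensor_mulLeft, lTensor_fPi_comul π m.2, map_zero]
  | add x y hx hy => simp only [map_add, hx, hy, add_zero]

lemma range_PhiV (π : P →ₐc[k] H) : LinearMap.range (PhiV π) = POmegaOneM π := by
  apply le_antisymm
  · rintro x ⟨t, rfl⟩
    induction t using TensorProduct.induction_on with
    | zero => rw [map_zero]; exact Submodule.zero_mem _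
    | tmul p v =>
        have h : PhiV π (p ⊗ₜ[k] v)
            = (LinearMap.mulLeft k p).rTensor P (thetaMap (k := k) (v : P)) := by
          simp only [PhiV, LinearMap.comp_apply, lTensor_tmul, Submodule.coe_subtype]
          exact Gamma_tmul _ p (v : P)
        rw [h]
        exact mulLeft_rTensor_mem_POmega π p (theta_mem_POmega π v.2)
    | add x y hx hy => rw [map_add]; exact Submodule.add_mem _ hx hy
  · rw [POmegaOneM, Submodule.span_le]
    rintro x ⟨p, ω, hω, rfl⟩
    have hωM : ω ∈ LinearMap.range (LinearMap.lTensor P (coinvSub π).subtype) := by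
      obtain ⟨u, hu⟩ := hω.2
      exact ⟨(coinvSub π).subtype.rTensor _ u, by
        rw [← LinearMap.comp_apply, lTensor_comp_rTensor, hu]⟩
    have hmem : PsiFull ((LinearMap.mulLeft k p).rTensor P ω)
        ∈ LinearMap.range (LinearMap.lTensor P (Vsub π).subtype) := by
      rw [range_lTensor_V, Submodule.mem_inf]
      constructor
      · rw [LinearMap.mem_ker, psi_mulLeft, lTensor_rTensor_mulLeft, psi_kerf π hωM,
          map_zero]
      · rw [LinearMap.mem_ker, psi_mulLeft, lTensor_rTensor_mulLeft]
        have h2 := LinearMap.congr_fun (psi_counit_comp (k := k) (P := P)) ω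
        simp only [LinearMap.comp_apply] at h2
        rw [h2, LinearMap.mem_ker.mp hω.1, map_zero, map_zero]
    obtain ⟨t, ht⟩ := hmem
    refine ⟨t, ?_⟩
    have : PhiV π t = PhiFull (PsiFull ((LinearMap.mulLeft k p).rTensor P ω)) := by
      simp only [PhiV, LinearMap.comp_apply, ht]
    rw [this]
    simpa using LinearMap.congr_fun (phi_comp_psi (k := k) (P := P))
      ((LinearMap.mulLeft k p).rTensor P ω)

end Aux

/-- for a surjective Hopf algebra morphism `π : P → H` (commuting with the
antipodes): (a) for every `v ∈ V = M ∩ ker ε`, `θ(v) = Σ S(v₍₁₎) ⊗ v₍₂₎` equals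
`Σ S(v₍₁₎)·(1 ⊗ v₍₂₎ − v₍₂₎ ⊗ 1)` and belongs to `P·Ω¹M`; (b) the maps
`Φ(p ⊗ v) = Σ p S(v₍₁₎) ⊗ v₍₂₎` and `Ψ(a ⊗ b) = Σ a b₍₁₎ ⊗ b₍₂₎` restrict to mutually
inverse bijections between `P ⊗ V` and `P·Ω¹M`. -/
theorem statement13 (π : P →ₐc[k] H) (hsurj : Function.Surjective π)
    (hS : ∀ x : P, π (HopfAlgebra.antipode (R := k) x)
      = HopfAlgebra.antipode (R := k) (π x)) :
    -- (a)
    (∀ v ∈ Vsub π, thetaMap (k := k) v = thetaMap' v ∧ thetaMap (k := k) v ∈ POmegaOneM π)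
    -- (b)
    ∧ Function.Injective (PhiV π)
    ∧ LinearMap.range (PhiV π) = POmegaOneM π
    ∧ (∀ y ∈ POmegaOneM π, PhiFull (PsiFull y) = y)
    ∧ (∀ x : P ⊗[k] ↥(Vsub π),
        PsiFull (PhiV π x) = LinearMap.lTensor P (Vsub π).subtype x) := by
  have hpsiphi : ∀ z : P ⊗[k] ↥(Vsub π),
      PsiFull (PhiV π z) = LinearMap.lTensor P (Vsub π).subtype z := by
    intro z
    simp only [PhiV, LinearMap.comp_apply]
    simpa using LinearMap.congr_fun (psi_comp_phi (k := k) (P := P))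
      (LinearMap.lTensor P (Vsub π).subtype z)
  refine ⟨?_, ?_, range_PhiV π, ?_, hpsiphi⟩
  · intro v hv
    exact ⟨theta_eq_theta' hv.2, theta_mem_POmega π hv⟩
  · have hinj : Function.Injective (LinearMap.lTensor P (Vsub π).subtype) :=
      Module.Flat.lTensor_preserves_injective_linearMap _ (Submodule.injective_subtype _)
    intro x y hxy
    apply hinj
    rw [← hpsiphi x, ← hpsiphi y, hxy]
  · intro y _
    simpa using LinearMap.congr_fun (phi_comp_psi (k := k) (P := P)) y
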